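/- If R ⊆ P is a skew category of partitions, then F_∞(R) := S_∞({a_{ind(p)} : k ∈ ℕ₀, p ∈ R(k,0)}) is an S_∞-invariant normal subgroup of ℤ₂^{*∞}. -/

import Mathlib

attribute [local instance] Classical.propDecidable

noncomputable section

namespace GTQG

/-! ## Partitions -/

/-- The set `P(k,l)` of partitions of `{1,…,k,1',…,l'}`, encoded as equivalence
relations (i.e. set partitions) on the disjoint union `Fin k ⊕ Fin l`. -/
abbrev Part (k l : ℕ) : Type := Setoid (Fin k ⊕ Fin l)

/-- `ker(i,j)`: the partition whose blocks are the fibers of the labelling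
`x ↦ i x` on upper points and `y ↦ j y` on lower points. -/
def kerPartA {α : Type*} {k l : ℕ} (i : Fin k → α) (j : Fin l → α) : Part k l :=
  Setoid.ker (Sum.elim i j)

/-- `ker(i,j)` for `ℕ`-valued multi-indices. -/
abbrev kerPart {k l : ℕ} (i : Fin k → ℕ) (j : Fin l → ℕ) : Part k l := kerPartA i j

/-- `ker(i) = ker(i,∅) ∈ P(k,0)`. -/
def kerPart0 {k : ℕ} (i : Fin k → ℕ) : Part k 0 := kerPartA i Fin.elim0

/-- The pair partition `⊔ ∈ P(0,2)`. -/
def pairPart : Part 0 2 := kerPartA Fin.elim0 (fun _ => (1 : ℕ))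

/-- The identity partition `| ∈ P(1,1)`. -/
def idPart : Part 1 1 := kerPartA (fun _ => (1 : ℕ)) (fun _ => (1 : ℕ))

/-- The partition `p̂ = ker((1,1,2),(2,1,1)) ∈ P(3,3)`. -/
def pHat : Part 3 3 := kerPart ![1, 1, 2] ![2, 1, 1]

/-- The involution `p* ∈ P(l,k)`, turning `p` upside-down. -/
def invol {k l : ℕ} (p : Part k l) : Part l k := Setoid.comap Sum.swap p

/-- The number of blocks of a partition. -/
def blockCount {k l : ℕ} (p : Part k l) : ℕ := Nat.card (Quotient p)

/-- The restriction of `p` to its upper row. -/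
def upperSetoid {k l : ℕ} (p : Part k l) : Setoid (Fin k) := Setoid.comap Sum.inl p

/-- The restriction of `p` to its lower row. -/
def lowerSetoid {k l : ℕ} (p : Part k l) : Setoid (Fin l) := Setoid.comap Sum.inr p

/-- `p ∈ P(k,l)` and `q ∈ P(l,l')` are compatible if the lower row of `p`
and the upper row of `q` have the same block structure
(i.e. `j^(p) ∈ S_∞(i^(q))`). -/
def Compatible {k l l' : ℕ} (p : Part k l) (q : Part l l') : Prop :=
  lowerSetoid p = upperSetoid q

section Comp

variable {k l l' : ℕ}

/-- The points of the vertical concatenation of `p ∈ P(k,l)` and `q ∈ P(l,l')`: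
`k` upper points, `l` middle points, `l'` lower points. -/
abbrev CompCarrier (k l l' : ℕ) : Type := Fin k ⊕ (Fin l ⊕ Fin l')

/-- Inclusion of the points of `p` into the vertical concatenation. -/
def topIncl : Fin k ⊕ Fin l → CompCarrier k l l' := Sum.map id Sum.inl

/-- Inclusion of the points of `q` into the vertical concatenation. -/
def botIncl : Fin l ⊕ Fin l' → CompCarrier k l l' := Sum.inr

/-- Two points of the vertical concatenation are directly connected if they are
connected by a string of `p` or by a string of `q`. -/
def compRel (p : Part k l) (q : Part l l') :
    CompCarrier k l l' → CompCarrier k l l' → Prop := fun x y =>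
  (∃ u v, p u v ∧ x = topIncl u ∧ y = topIncl v) ∨
  (∃ u v, q u v ∧ x = botIncl u ∧ y = botIncl v)

/-- The partition of all points of the vertical concatenation of `p` and `q`
into connected components. -/
def middleJoin (p : Part k l) (q : Part l l') : Setoid (CompCarrier k l l') :=
  Relation.EqvGen.setoid (compRel p q)

/-- The composition `qp ∈ P(k,l')`: vertical concatenation with all loops removed. -/
def compPart (p : Part k l) (q : Part l l') : Part k l' :=
  Setoid.comap (Sum.map id Sum.inr) (middleJoin p q)

/-- A point of the vertical concatenation is a middle point. -/
def IsMiddle (x : CompCarrier k l l') : Prop := ∃ m : Fin l, x = Sum.inr (Sum.inl m)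

/-- The number `l(q,p)` of loops in the vertical concatenation of `p` and `q`:
connected components consisting entirely of middle points. -/
def loopCount (p : Part k l) (q : Part l l') : ℕ :=
  Nat.card {c : Quotient (middleJoin p q) //
    ∀ x : CompCarrier k l l', Quotient.mk (middleJoin p q) x = c → IsMiddle x}

end Comp

/-- The direct sum of two set partitions. -/
def sumSetoid {α β : Type*} (p : Setoid α) (q : Setoid β) : Setoid (α ⊕ β) :=
  Setoid.ker (Sum.map (Quotient.mk p) (Quotient.mk q))

/-- The tensor product `p ⊗ q ∈ P(k+k',l+l')`: horizontal concatenation. -/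
def tensorPart {k l k' l' : ℕ} (p : Part k l) (q : Part k' l') : Part (k + k') (l + l') :=
  Setoid.comap
    (Sum.elim
      (fun z => Fin.addCases (fun a => Sum.inl (Sum.inl a)) (fun b => Sum.inr (Sum.inl b)) z)
      (fun z => Fin.addCases (fun a => Sum.inl (Sum.inr a)) (fun b => Sum.inr (Sum.inr b)) z))
    (sumSetoid p q)

/-! ## Rotations -/

/-- Rotating the outermost left upper leg to the lower row (reindexing map). -/
def rotULDmap (k l : ℕ) : Fin k ⊕ Fin (l + 1) → Fin (k + 1) ⊕ Fin l
  | .inl x => .inl x.succ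
  | .inr y => Fin.cases (Sum.inl 0) (fun i => Sum.inr i) y

/-- Rotating the outermost left upper leg to the lower row. -/
def rotULD {k l : ℕ} (p : Part (k + 1) l) : Part k (l + 1) :=
  Setoid.comap (rotULDmap k l) p

/-- Rotating the outermost left lower leg to the upper row (reindexing map). -/
def rotDLUmap (k l : ℕ) : Fin (k + 1) ⊕ Fin l → Fin k ⊕ Fin (l + 1)
  | .inl x => Fin.cases (Sum.inr 0) (fun i => Sum.inl i) x
  | .inr y => .inr y.succ

/-- Rotating the outermost left lower leg to the upper row. -/
def rotDLU {k l : ℕ} (p : Part k (l + 1)) : Part (k + 1) l :=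
  Setoid.comap (rotDLUmap k l) p

/-- Rotating the outermost right upper leg to the lower row (reindexing map). -/
def rotURDmap (k l : ℕ) : Fin k ⊕ Fin (l + 1) → Fin (k + 1) ⊕ Fin l
  | .inl x => .inl x.castSucc
  | .inr y => Fin.lastCases (Sum.inl (Fin.last k)) (fun i => Sum.inr i) y

/-- Rotating the outermost right upper leg to the lower row. -/
def rotURD {k l : ℕ} (p : Part (k + 1) l) : Part k (l + 1) :=
  Setoid.comap (rotURDmap k l) p

/-- Rotating the outermost right lower leg to the upper row (reindexing map). -/
def rotDRUmap (k l : ℕ) : Fin (k + 1) ⊕ Fin l → Fin k ⊕ Fin (l + 1)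
  | .inl x => Fin.lastCases (Sum.inr (Fin.last l)) (fun i => Sum.inl i) x
  | .inr y => .inr y.castSucc

/-- Rotating the outermost right lower leg to the upper row. -/
def rotDRU {k l : ℕ} (p : Part k (l + 1)) : Part (k + 1) l :=
  Setoid.comap (rotDRUmap k l) p

/-- One basic rotation step between partitions (with varying numbers of
upper and lower points). -/
inductive BasicRot : (Σ k l : ℕ, Part k l) → (Σ k l : ℕ, Part k l) → Prop
  | uld {k l : ℕ} (p : Part (k + 1) l) : BasicRot ⟨k + 1, l, p⟩ ⟨k, l + 1, rotULD p⟩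
  | dlu {k l : ℕ} (p : Part k (l + 1)) : BasicRot ⟨k, l + 1, p⟩ ⟨k + 1, l, rotDLU p⟩
  | urd {k l : ℕ} (p : Part (k + 1) l) : BasicRot ⟨k + 1, l, p⟩ ⟨k, l + 1, rotURD p⟩
  | dru {k l : ℕ} (p : Part k (l + 1)) : BasicRot ⟨k, l + 1, p⟩ ⟨k + 1, l, rotDRU p⟩

/-- `IsRotationOf q p`: `q` is obtained from `p` by finitely many basic rotations. -/
def IsRotationOf (q p : Σ k l : ℕ, Part k l) : Prop := Relation.ReflTransGen BasicRot p q

/-- A family `R ⊆ P` is closed under rotation. -/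
def RotationClosed (R : ∀ k l : ℕ, Set (Part k l)) : Prop :=
  ∀ {k l k' l' : ℕ} (p : Part k l) (q : Part k' l'),
    p ∈ R k l → IsRotationOf ⟨k', l', q⟩ ⟨k, l, p⟩ → q ∈ R k' l'

/-! ## (Skew) categories of partitions -/

/-- A skew category of partitions: a collection `R ⊆ P` containing `⊔` and `|`,
closed under involution, connected tensor products and conditioned composition. -/
structure IsSkewCategory (R : ∀ k l : ℕ, Set (Part k l)) : Prop where
  pair_mem : pairPart ∈ R 0 2
  id_mem : idPart ∈ R 1 1
  invol_mem : ∀ {k l : ℕ} {p : Part k l}, p ∈ R k l → invol p ∈ R l k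
  conn_tensor_mem : ∀ {k l k' l' : ℕ} {p : Part k l} {q : Part k' l'}
      (i : Fin k → ℕ) (j : Fin l → ℕ) (f : Fin k' → ℕ) (g : Fin l' → ℕ),
      p ∈ R k l → q ∈ R k' l' → kerPart i j = p → kerPart f g = q →
      kerPart (Fin.append i f) (Fin.append j g) ∈ R (k + k') (l + l')
  cond_comp_mem : ∀ {k l l' : ℕ} {p : Part k l} {q : Part l l'},
      p ∈ R k l → q ∈ R l l' → Compatible p q → compPart p q ∈ R k l'

/-- A category of partitions: a collection `C ⊆ P` containing `⊔` and `|`,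
closed under involution, tensor products and composition. -/
structure IsCategoryOfPartitions (C : ∀ k l : ℕ, Set (Part k l)) : Prop where
  pair_mem : pairPart ∈ C 0 2
  id_mem : idPart ∈ C 1 1
  invol_mem : ∀ {k l : ℕ} {p : Part k l}, p ∈ C k l → invol p ∈ C l k
  tensor_mem : ∀ {k l k' l' : ℕ} {p : Part k l} {q : Part k' l'},
      p ∈ C k l → q ∈ C k' l' → tensorPart p q ∈ C (k + k') (l + l')
  comp_mem : ∀ {k l l' : ℕ} {p : Part k l} {q : Part l l'},
      p ∈ C k l → q ∈ C l l' → compPart p q ∈ C k l'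

/-- The skew category of partitions generated by a family `E`. -/
def skewGenerated (E : ∀ k l : ℕ, Set (Part k l)) : ∀ k l : ℕ, Set (Part k l) :=
  fun k l => { p | ∀ R : ∀ k l : ℕ, Set (Part k l),
    IsSkewCategory R → (∀ k' l' : ℕ, E k' l' ⊆ R k' l') → p ∈ R k l }

/-- The category of partitions generated by a family `E`. -/
def catGenerated (E : ∀ k l : ℕ, Set (Part k l)) : ∀ k l : ℕ, Set (Part k l) :=
  fun k l => { p | ∀ C : ∀ k l : ℕ, Set (Part k l),
    IsCategoryOfPartitions C → (∀ k' l' : ℕ, E k' l' ⊆ C k' l') → p ∈ C k l }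

end GTQG
namespace GTQG

/-! ## The free products `ℤ₂^{*∞}` and `ℤ₂^{*n}` -/

/-- The cyclic group of order two (written multiplicatively). -/
abbrev Z2 : Type := Multiplicative (ZMod 2)

/-- `ℤ₂^{*∞}`, the free product of countably many copies of `ℤ₂`. -/
abbrev FreeZ2 : Type := Monoid.CoprodI (fun _ : ℕ => Z2)

/-- `ℤ₂^{*n}`, the free product of `n` copies of `ℤ₂`. -/
abbrev FreeZ2n (n : ℕ) : Type := Monoid.CoprodI (fun _ : Fin n => Z2)

/-- The generator `a_i` of `ℤ₂^{*∞}`. -/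
def gen (i : ℕ) : FreeZ2 := Monoid.CoprodI.of (i := i) (Multiplicative.ofAdd (1 : ZMod 2))

/-- The generator `a_i` of `ℤ₂^{*n}`. -/
def genn {n : ℕ} (i : Fin n) : FreeZ2n n :=
  Monoid.CoprodI.of (i := i) (Multiplicative.ofAdd (1 : ZMod 2))

/-- The word `a_i = a_{i₁} ⋯ a_{i_k} ∈ ℤ₂^{*∞}` associated to a multi-index. -/
def aWord {k : ℕ} (i : Fin k → ℕ) : FreeZ2 := (List.ofFn fun x => gen (i x)).prod

/-- The word `a_i = a_{i₁} ⋯ a_{i_k} ∈ ℤ₂^{*n}` associated to a multi-index. -/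
def aWordn {n k : ℕ} (i : Fin k → Fin n) : FreeZ2n n := (List.ofFn fun x => genn (i x)).prod

/-- The natural embedding `ℤ₂^{*n} → ℤ₂^{*∞}`. -/
def incl (n : ℕ) : FreeZ2n n →* FreeZ2 :=
  Monoid.CoprodI.lift (fun i => Monoid.CoprodI.of (M := fun _ : ℕ => Z2) (i := (i : ℕ)))

/-- The endomorphism of `ℤ₂^{*∞}` induced by a map `σ : ℕ → ℕ`, `a_i ↦ a_{σ i}`.
For bijective `σ` this is the action of `S_∞`, in general that of `sS_∞`. -/
def permEndo (σ : ℕ → ℕ) : FreeZ2 →* FreeZ2 :=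
  Monoid.CoprodI.lift (fun i => Monoid.CoprodI.of (M := fun _ : ℕ => Z2) (i := σ i))

/-- The endomorphism of `ℤ₂^{*n}` induced by a map `σ : Fin n → Fin n`. -/
def permEndon {n : ℕ} (σ : Fin n → Fin n) : FreeZ2n n →* FreeZ2n n :=
  Monoid.CoprodI.lift (fun i => Monoid.CoprodI.of (M := fun _ : Fin n => Z2) (i := σ i))

/-- A map `ℕ → ℕ` is finitely supported (moves only finitely many points). -/
def FinitelySupported (σ : ℕ → ℕ) : Prop := {x | σ x ≠ x}.Finite

/-- `F_∞(D) = S_∞({a_{ind(p)} : p ∈ D(k,0)})`, the set of all words `a_i` with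
`ker(i) ∈ D(k,0)` (the `S_∞`-orbit of the words of minimal-index labellings). -/
def Finfty (D : ∀ k l : ℕ, Set (Part k l)) : Set FreeZ2 :=
  { g | ∃ (k : ℕ) (i : Fin k → ℕ), kerPart0 i ∈ D k 0 ∧ g = aWord i }

end GTQG
namespace GTQG

/-! ## The maps `T̂_p` and `T_p` -/

/-- `(ℂ^n)^{⊗k}`, realised as functions on multi-indices (the standard basis
`e_{i₁} ⊗ ⋯ ⊗ e_{i_k}` is indexed by multi-indices `i ∈ {1,…,n}^k`). -/
abbrev MV (n k : ℕ) : Type := (Fin k → Fin n) → ℂ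

/-- `δ̂_p(i,j) = 1` iff `(i,j) ∈ S_∞(ind(p))`, i.e. iff `ker(i,j) = p`. -/
def hatDelta {k l : ℕ} (p : Part k l) {n : ℕ} (i : Fin k → Fin n) (j : Fin l → Fin n) : ℂ :=
  if kerPartA i j = p then 1 else 0

/-- `δ_p(i,j) = 1` iff `(i,j) ∈ sS_∞(ind(p))`, i.e. iff the labelling `(i,j)`
is constant on the blocks of `p`. -/
def softDelta {k l : ℕ} (p : Part k l) {n : ℕ} (i : Fin k → Fin n) (j : Fin l → Fin n) : ℂ :=
  if p ≤ kerPartA i j then 1 else 0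

/-- The linear map `T̂_p^(n) : (ℂ^n)^{⊗k} → (ℂ^n)^{⊗l}`. -/
def hatT (n : ℕ) {k l : ℕ} (p : Part k l) : MV n k →ₗ[ℂ] MV n l :=
  Matrix.mulVecLin (Matrix.of fun (j : Fin l → Fin n) (i : Fin k → Fin n) => hatDelta p i j)

/-- The linear map `T_p^(n) : (ℂ^n)^{⊗k} → (ℂ^n)^{⊗l}` of Banica–Speicher. -/
def softT (n : ℕ) {k l : ℕ} (p : Part k l) : MV n k →ₗ[ℂ] MV n l :=
  Matrix.mulVecLin (Matrix.of fun (j : Fin l → Fin n) (i : Fin k → Fin n) => softDelta p i j)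

/-- The tensor product of linear maps, under the identification
`(ℂ^n)^{⊗k} ⊗ (ℂ^n)^{⊗k'} ≅ (ℂ^n)^{⊗(k+k')}` of basis vectors
`(e_{i} ⊗ e_{f} ↦ e_{if}`, concatenation of multi-indices). -/
def tensorMap {n k l k' l' : ℕ} (S : MV n k →ₗ[ℂ] MV n l) (T : MV n k' →ₗ[ℂ] MV n l') :
    MV n (k + k') →ₗ[ℂ] MV n (l + l') :=
  Matrix.mulVecLin (Matrix.of fun (x : Fin (l + l') → Fin n) (y : Fin (k + k') → Fin n) =>
    LinearMap.toMatrix' S (fun a => x (Fin.castAdd l' a)) (fun a => y (Fin.castAdd k' a)) *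
    LinearMap.toMatrix' T (fun b => x (Fin.natAdd l b)) (fun b => y (Fin.natAdd k b)))

/-- The adjoint of a linear map `(ℂ^n)^{⊗k} → (ℂ^n)^{⊗l}` with respect to the
standard Hermitian inner products (conjugate-transpose of the matrix in the
standard bases). -/
def adjointMap {n k l : ℕ} (S : MV n k →ₗ[ℂ] MV n l) : MV n l →ₗ[ℂ] MV n k :=
  Matrix.mulVecLin (LinearMap.toMatrix' S).conjTranspose

/-- The map `ζ : ℂ → (ℂ^n)^{⊗2}`, `1 ↦ Σᵢ eᵢ ⊗ eᵢ`. -/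
def zetaMap (n : ℕ) : MV n 0 →ₗ[ℂ] MV n 2 :=
  Matrix.mulVecLin (Matrix.of fun (j : Fin 2 → Fin n) (_ : Fin 0 → Fin n) =>
    if j 0 = j 1 then (1 : ℂ) else 0)

/-- A tensor category with duals (of subspaces of `Hom((ℂ^n)^{⊗k}, (ℂ^n)^{⊗l})`). -/
structure IsTensorCategoryWithDuals (n : ℕ)
    (H : ∀ k l : ℕ, Submodule ℂ (MV n k →ₗ[ℂ] MV n l)) : Prop where
  tensor_mem : ∀ {k l k' l' : ℕ} (S : MV n k →ₗ[ℂ] MV n l) (T : MV n k' →ₗ[ℂ] MV n l'),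
      S ∈ H k l → T ∈ H k' l' → tensorMap S T ∈ H (k + k') (l + l')
  comp_mem : ∀ {k l l' : ℕ} (S : MV n k →ₗ[ℂ] MV n l) (T : MV n l →ₗ[ℂ] MV n l'),
      S ∈ H k l → T ∈ H l l' → T ∘ₗ S ∈ H k l'
  adjoint_mem : ∀ {k l : ℕ} (S : MV n k →ₗ[ℂ] MV n l), S ∈ H k l → adjointMap S ∈ H l k
  id_mem : LinearMap.id ∈ H 1 1
  zeta_mem : zetaMap n ∈ H 0 2

/-- The collection of subspaces `span{T̂_p^(n) : p ∈ R(k,l)}`. -/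
def spanOf (n : ℕ) (R : ∀ k l : ℕ, Set (Part k l)) :
    ∀ k l : ℕ, Submodule ℂ (MV n k →ₗ[ℂ] MV n l) :=
  fun k l => Submodule.span ℂ {T | ∃ p ∈ R k l, T = hatT n p}

/-- All connected tensor products of `p` and `q`. -/
def connTensorSet {k l k' l' : ℕ} (p : Part k l) (q : Part k' l') :
    Set (Part (k + k') (l + l')) :=
  { r | ∃ (i : Fin k → ℕ) (j : Fin l → ℕ) (f : Fin k' → ℕ) (g : Fin l' → ℕ),
      kerPart i j = p ∧ kerPart f g = q ∧ r = kerPart (Fin.append i f) (Fin.append j g) }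

/-- All connected conditioned compositions of `p` and `q`. -/
def connCompSet {k l l' : ℕ} (p : Part k l) (q : Part l l') : Set (Part k l') :=
  { r | ∃ (i : Fin k → ℕ) (h : Fin l → ℕ) (g : Fin l' → ℕ),
      kerPart i h = p ∧ kerPart h g = q ∧ r = kerPart i g }

end GTQG
namespace GTQG

section Aux

variable {R : ∀ k l : ℕ, Set (Part k l)}

private def cst (b : ℕ) : Fin 1 → ℕ := fun _ => b
private def two (b : ℕ) : Fin 2 → ℕ := fun _ => b

lemma append_val {m n : ℕ} (f : Fin m → ℕ) (g : Fin n → ℕ) (x : Fin (m + n)) :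
    Fin.append f g x = if h : (x : ℕ) < m then f ⟨x, h⟩ else g ⟨(x : ℕ) - m, by omega⟩ := by
  induction x using Fin.addCases with
  | left i =>
      rw [Fin.append_left, dif_pos (by simpa using i.isLt)]
      exact congrArg f (Fin.ext (by simp))
  | right i =>
      rw [Fin.append_right, dif_neg (by simp)]
      exact congrArg g (Fin.ext (by simp))

lemma append_elim0_right {k : ℕ} (f : Fin k → ℕ) :
    (Fin.append f (Fin.elim0 : Fin 0 → ℕ) : Fin (k + 0) → ℕ) = f := by
  funext x
  rw [append_val, dif_pos (by omega)]
  exact congrArg f (Fin.ext rfl)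

lemma append_elim0_cst (b : ℕ) :
    (Fin.append (Fin.elim0 : Fin 0 → ℕ) (cst b) : Fin (0 + 1) → ℕ) = cst b := by
  funext x
  rw [append_val, dif_neg (by omega)]
  rfl

lemma append_elim0_elim0 :
    (Fin.append (Fin.elim0 : Fin 0 → ℕ) (Fin.elim0 : Fin 0 → ℕ) : Fin (0 + 0) → ℕ)
      = (Fin.elim0 : Fin 0 → ℕ) := by
  funext x
  exact (x : Fin 0).elim0

lemma append_castSucc_last {l : ℕ} (v : Fin (l + 1) → ℕ) :
    Fin.append (v ∘ Fin.castSucc) (cst (v (Fin.last l))) = v := by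
  funext x
  rw [append_val]
  split_ifs with h
  · exact congrArg v (Fin.ext rfl)
  · exact congrArg v (Fin.ext (by simp [Fin.last]; omega))

lemma append_append_two {l : ℕ} (v : Fin l → ℕ) (b : ℕ) :
    (Fin.append (Fin.append v (cst b)) (cst b) : Fin (l + 1 + 1) → ℕ) = Fin.append v (two b) := by
  funext x
  simp only [append_val]
  split_ifs <;> first | rfl | omega

/-! ### Basic `kerPartA` computations -/

lemma part00_eq (p q : Part 0 0) : p = q :=
  Setoid.ext fun a => by
    cases a with
    | inl x => exact x.elim0
    | inr x => exact x.elim0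

lemma ker_cst_eq_idPart (b : ℕ) : kerPartA (cst b) (cst b) = idPart :=
  Setoid.ext fun a b' => by
    cases a <;> cases b' <;> exact ⟨fun _ => rfl, fun _ => rfl⟩

lemma ker_two_eq_pairPart (b : ℕ) :
    kerPartA (Fin.elim0 : Fin 0 → ℕ) (two b) = pairPart :=
  Setoid.ext fun a b' => by
    cases a with
    | inl x => exact x.elim0
    | inr y =>
        cases b' with
        | inl x => exact x.elim0
        | inr y' => exact ⟨fun _ => rfl, fun _ => rfl⟩

lemma ker_two_eq_involPair (b : ℕ) :
    kerPartA (two b) (Fin.elim0 : Fin 0 → ℕ) = invol pairPart :=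
  Setoid.ext fun a b' => by
    cases a with
    | inr x => exact x.elim0
    | inl y =>
        cases b' with
        | inr x => exact x.elim0
        | inl y' =>
            show (two b) y = (two b) y' ↔ pairPart (Sum.swap (Sum.inl y)) (Sum.swap (Sum.inl y'))
            exact ⟨fun _ => rfl, fun _ => rfl⟩

lemma ker_append_cst_eq_involPair (b : ℕ) :
    kerPartA (Fin.append (cst b) (cst b)) (Fin.elim0 : Fin 0 → ℕ) = invol pairPart := by
  have hf : (Fin.append (cst b) (cst b) : Fin (1 + 1) → ℕ) = two b := by
    funext x
    rw [append_val]
    split_ifs <;> rfl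
  rw [hf]
  exact ker_two_eq_involPair b

lemma ker_comp_inj {σ : ℕ → ℕ} (hσ : Function.Injective σ) {k : ℕ} (i : Fin k → ℕ) :
    kerPartA (σ ∘ i) (Fin.elim0 : Fin 0 → ℕ) = kerPartA i (Fin.elim0 : Fin 0 → ℕ) :=
  Setoid.ext fun a b => by
    cases a with
    | inr y => exact y.elim0
    | inl s =>
        cases b with
        | inr y => exact y.elim0
        | inl t => exact ⟨fun h => hσ h, fun h => congrArg σ h⟩

/-! ### The composition computation -/

lemma compatible_kers {k l l' : ℕ} (u : Fin k → ℕ) (m : Fin l → ℕ) (v : Fin l' → ℕ) :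
    Compatible (kerPartA u m) (kerPartA m v) :=
  Setoid.ext fun _ _ => Iff.rfl

lemma compPart_kers {k l l' : ℕ} (u : Fin k → ℕ) (m : Fin l → ℕ) (v : Fin l' → ℕ)
    (hC : ∀ s y, u s = v y → ∃ t, m t = u s) :
    compPart (kerPartA u m) (kerPartA m v) = kerPartA u v := by
  have hp : ∀ (a b : Fin k ⊕ Fin l), Sum.elim u m a = Sum.elim u m b →
      Relation.EqvGen (compRel (kerPartA u m) (kerPartA m v)) (topIncl a) (topIncl b) :=
    fun a b h => Relation.EqvGen.rel _ _ (Or.inl ⟨a, b, h, rfl, rfl⟩)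
  have hq : ∀ (a b : Fin l ⊕ Fin l'), Sum.elim m v a = Sum.elim m v b →
      Relation.EqvGen (compRel (kerPartA u m) (kerPartA m v)) (botIncl a) (botIncl b) :=
    fun a b h => Relation.EqvGen.rel _ _ (Or.inr ⟨a, b, h, rfl, rfl⟩)
  have key : ∀ x y, Relation.EqvGen (compRel (kerPartA u m) (kerPartA m v)) x y ↔
      Sum.elim u (Sum.elim m v) x = Sum.elim u (Sum.elim m v) y := by
    intro x y
    constructor
    · intro h
      induction h with
      | rel a b hab =>
          rcases hab with ⟨c, d, hcd, rfl, rfl⟩ | ⟨c, d, hcd, rfl, rfl⟩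
          · cases c <;> cases d <;> exact hcd
          · cases c <;> cases d <;> exact hcd
      | refl a => rfl
      | symm a b _ ih => exact ih.symm
      | trans a b c _ _ ih1 ih2 => exact ih1.trans ih2
    · intro h
      match x, y with
      | .inl s, .inl s' => exact hp (.inl s) (.inl s') h
      | .inl s, .inr (.inl t) => exact hp (.inl s) (.inr t) h
      | .inr (.inl t), .inl s => exact hp (.inr t) (.inl s) h
      | .inr (.inl t), .inr (.inl t') => exact hp (.inr t) (.inr t') h
      | .inr (.inr y'), .inr (.inr y'') => exact hq (.inr y') (.inr y'') h
      | .inr (.inl t), .inr (.inr y') => exact hq (.inl t) (.inr y') h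
      | .inr (.inr y'), .inr (.inl t) => exact hq (.inr y') (.inl t) h
      | .inl s, .inr (.inr y') =>
          obtain ⟨t, ht⟩ := hC s y' h
          exact Relation.EqvGen.trans _ _ _ (hp (.inl s) (.inr t) ht.symm)
            (hq (.inl t) (.inr y') (ht.trans h))
      | .inr (.inr y'), .inl s =>
          obtain ⟨t, ht⟩ := hC s y' h.symm
          exact Relation.EqvGen.symm _ _ (Relation.EqvGen.trans _ _ _
            (hp (.inl s) (.inr t) ht.symm) (hq (.inl t) (.inr y') (ht.trans h.symm)))
  apply Setoid.ext
  intro a b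
  show Relation.EqvGen _ (Sum.map id Sum.inr a) (Sum.map id Sum.inr b) ↔ _
  rw [key]
  cases a <;> cases b <;> exact Iff.rfl

end Aux

end GTQG
namespace GTQG

section Machinery

variable {R : ∀ k l : ℕ, Set (Part k l)}

lemma empty_mem (hR : IsSkewCategory R) :
    kerPartA (Fin.elim0 : Fin 0 → ℕ) (Fin.elim0 : Fin 0 → ℕ) ∈ R 0 0 := by
  have hcompat : Compatible pairPart (invol pairPart) := Setoid.ext fun _ _ => Iff.rfl
  have h := hR.cond_comp_mem hR.pair_mem (hR.invol_mem hR.pair_mem) hcompat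
  rwa [part00_eq (compPart pairPart (invol pairPart))
    (kerPartA (Fin.elim0 : Fin 0 → ℕ) (Fin.elim0 : Fin 0 → ℕ))] at h

lemma id_tensor (hR : IsSkewCategory R) (l : ℕ) : ∀ v : Fin l → ℕ, kerPartA v v ∈ R l l := by
  induction l with
  | zero =>
      intro v
      rw [part00_eq (kerPartA v v) (kerPartA (Fin.elim0 : Fin 0 → ℕ) (Fin.elim0 : Fin 0 → ℕ))]
      exact empty_mem hR
  | succ l ih =>
      intro v
      have h := hR.conn_tensor_mem (v ∘ Fin.castSucc) (v ∘ Fin.castSucc)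
        (cst (v (Fin.last l))) (cst (v (Fin.last l))) (ih _) hR.id_mem rfl
        (ker_cst_eq_idPart _)
      rwa [append_castSucc_last v] at h

/-- Rotating the last lower point up to the last upper position. -/
lemma rot_up (hR : IsSkewCategory R) {k l : ℕ} (w : Fin k → ℕ) (v : Fin l → ℕ) (b : ℕ)
    (h : kerPartA w (Fin.append v (cst b)) ∈ R k (l + 1)) :
    kerPartA (Fin.append w (cst b)) v ∈ R (k + 1) l := by
  have h1 := hR.conn_tensor_mem w (Fin.append v (cst b)) (cst b) (cst b) h hR.id_mem rfl
    (ker_cst_eq_idPart b)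
  rw [append_append_two v b] at h1
  have h2 := hR.conn_tensor_mem v v (two b) (Fin.elim0 : Fin 0 → ℕ) (id_tensor hR l v)
    (hR.invol_mem hR.pair_mem) rfl (ker_two_eq_involPair b)
  rw [append_elim0_right v] at h2
  have hc := hR.cond_comp_mem h1 h2
    (compatible_kers (Fin.append w (cst b)) (Fin.append v (two b)) v)
  rw [compPart_kers (Fin.append w (cst b)) (Fin.append v (two b)) v
    (fun s y hsy => ⟨Fin.castAdd 2 y, by rw [Fin.append_left]; exact hsy.symm⟩)] at hc
  exact hc

/-- Rotating the last upper point down (to a single lower point). -/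
lemma rot_down (hR : IsSkewCategory R) {K : ℕ} (i : Fin K → ℕ) (b : ℕ)
    (h : kerPartA (Fin.append i (cst b)) (Fin.elim0 : Fin 0 → ℕ) ∈ R (K + 1) 0) :
    kerPartA i (cst b) ∈ R K 1 := by
  have h1 := hR.conn_tensor_mem (Fin.append i (cst b)) (Fin.elim0 : Fin 0 → ℕ)
    (cst b) (cst b) h hR.id_mem rfl (ker_cst_eq_idPart b)
  rw [append_append_two i b, append_elim0_cst b] at h1
  have h2 := hR.conn_tensor_mem i i (Fin.elim0 : Fin 0 → ℕ) (two b) (id_tensor hR K i)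
    hR.pair_mem rfl (ker_two_eq_pairPart b)
  rw [append_elim0_right i] at h2
  have hc := hR.cond_comp_mem h2 h1 (compatible_kers i (Fin.append i (two b)) (cst b))
  rw [compPart_kers i (Fin.append i (two b)) (cst b)
    (fun s y hsy => ⟨Fin.natAdd K 0, by rw [Fin.append_right]; exact hsy.symm⟩)] at hc
  exact hc

/-- Rotating a single lower point up to the first upper position. -/
lemma rot_up_left (hR : IsSkewCategory R) {k : ℕ} (w : Fin k → ℕ) (b : ℕ)
    (h : kerPartA w (cst b) ∈ R k 1) :
    kerPartA (Fin.append (cst b) w) (Fin.elim0 : Fin 0 → ℕ) ∈ R (1 + k) 0 := by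
  have h1 := hR.conn_tensor_mem (cst b) (cst b) w (cst b) hR.id_mem h
    (ker_cst_eq_idPart b) rfl
  have h2 : kerPartA (Fin.append (cst b) (cst b)) (Fin.elim0 : Fin 0 → ℕ) ∈ R (1 + 1) 0 := by
    rw [ker_append_cst_eq_involPair b]
    exact hR.invol_mem hR.pair_mem
  have hc := hR.cond_comp_mem h1 h2
    (compatible_kers (Fin.append (cst b) w) (Fin.append (cst b) (cst b))
      (Fin.elim0 : Fin 0 → ℕ))
  rw [compPart_kers (Fin.append (cst b) w) (Fin.append (cst b) (cst b))
    (Fin.elim0 : Fin 0 → ℕ) (fun s y _ => y.elim0)] at hc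
  exact hc

/-- Cyclic rotation of a word partition: last letter moves to the front. -/
lemma cyclic (hR : IsSkewCategory R) {K : ℕ} (i : Fin K → ℕ) (b : ℕ)
    (h : kerPartA (Fin.append i (cst b)) (Fin.elim0 : Fin 0 → ℕ) ∈ R (K + 1) 0) :
    kerPartA (Fin.append (cst b) i) (Fin.elim0 : Fin 0 → ℕ) ∈ R (1 + K) 0 :=
  rot_up_left hR i b (rot_down hR i b h)

/-- Conjugation of a word partition by a generator. -/
lemma conj_ker (hR : IsSkewCategory R) {k : ℕ} (i : Fin k → ℕ)
    (hi : kerPartA i (Fin.elim0 : Fin 0 → ℕ) ∈ R k 0) (b : ℕ) :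
    kerPartA (Fin.append (cst b) (Fin.append i (cst b))) (Fin.elim0 : Fin 0 → ℕ)
      ∈ R (1 + (k + 1)) 0 := by
  have h1 := hR.conn_tensor_mem i (Fin.elim0 : Fin 0 → ℕ) (two b) (Fin.elim0 : Fin 0 → ℕ)
    hi (hR.invol_mem hR.pair_mem) rfl (ker_two_eq_involPair b)
  rw [append_elim0_elim0, ← append_append_two i b] at h1
  exact cyclic hR (Fin.append i (cst b)) b h1

end Machinery

end GTQG
namespace GTQG

section Words

variable {R : ∀ k l : ℕ, Set (Part k l)}

lemma aWord_zero (v : Fin 0 → ℕ) : aWord v = 1 := by simp [aWord]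

lemma aWord_cst (b : ℕ) : aWord (cst b) = gen b := by
  simp [aWord, List.ofFn_succ, cst]

lemma aWord_append {k k' : ℕ} (i : Fin k → ℕ) (f : Fin k' → ℕ) :
    aWord (Fin.append i f) = aWord i * aWord f := by
  unfold aWord
  rw [List.ofFn_add, List.prod_append]
  simp [Fin.append_left, Fin.append_right]

lemma gen_mul_self (b : ℕ) : gen b * gen b = 1 := by
  unfold gen
  rw [← map_mul]
  have : (Multiplicative.ofAdd (1 : ZMod 2)) * Multiplicative.ofAdd (1 : ZMod 2) = 1 := by
    decide
  rw [this, map_one]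

lemma gen_inv (b : ℕ) : (gen b)⁻¹ = gen b :=
  inv_eq_of_mul_eq_one_right (gen_mul_self b)

lemma permEndo_gen (σ : ℕ → ℕ) (b : ℕ) : permEndo σ (gen b) = gen (σ b) := by
  unfold permEndo gen
  rw [Monoid.CoprodI.lift_of]

lemma permEndo_aWord (σ : ℕ → ℕ) {k : ℕ} (i : Fin k → ℕ) :
    permEndo σ (aWord i) = aWord (σ ∘ i) := by
  unfold aWord
  have hfun : (⇑(permEndo σ) ∘ fun x => gen (i x)) = fun x => gen ((σ ∘ i) x) :=
    funext fun x => permEndo_gen σ (i x)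
  rw [map_list_prod, List.map_ofFn, hfun]

/-- Reversal: turning a partition upside down and rotating all points up. -/
lemma rev_words (hR : IsSkewCategory R) :
    ∀ (l : ℕ) (v : Fin l → ℕ) (k : ℕ) (w : Fin k → ℕ),
      kerPartA w v ∈ R k l →
      ∃ (K : ℕ) (W : Fin K → ℕ),
        kerPartA W (Fin.elim0 : Fin 0 → ℕ) ∈ R K 0 ∧ aWord W = aWord w * (aWord v)⁻¹ := by
  intro l
  induction l with
  | zero =>
      intro v k w h
      refine ⟨k, w, ?_, by rw [aWord_zero v, inv_one, mul_one]⟩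
      have : v = (Fin.elim0 : Fin 0 → ℕ) := funext fun x => x.elim0
      rwa [this] at h
  | succ l ih =>
      intro v k w h
      rw [← append_castSucc_last v] at h
      have h' := rot_up hR w (v ∘ Fin.castSucc) (v (Fin.last l)) h
      obtain ⟨K, W, hW, hw⟩ := ih (v ∘ Fin.castSucc) (k + 1) (Fin.append w (cst (v (Fin.last l)))) h'
      refine ⟨K, W, hW, ?_⟩
      have hv : aWord v = aWord (v ∘ Fin.castSucc) * gen (v (Fin.last l)) := by
        conv_lhs => rw [← append_castSucc_last v]
        rw [aWord_append, aWord_cst]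
      rw [hw, aWord_append, aWord_cst, hv, mul_inv_rev, gen_inv, mul_assoc]

end Words

end GTQG

namespace GTQG

lemma invol_ker {k l : ℕ} (i : Fin k → ℕ) (j : Fin l → ℕ) :
    invol (kerPartA i j) = kerPartA j i :=
  Setoid.ext fun a b => by cases a <;> cases b <;> exact Iff.rfl

/-- For a skew category of partitions `R`, the set
`F_∞(R)` is an `S_∞`-invariant normal subgroup of `ℤ₂^{*∞}`. -/
theorem Finfty_isNormalSubgroup (R : ∀ k l : ℕ, Set (Part k l))
    (hR : IsSkewCategory R) :
    ∃ N : Subgroup FreeZ2, (N : Set FreeZ2) = Finfty R ∧ N.Normal ∧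
      ∀ σ : Equiv.Perm ℕ, FinitelySupported ⇑σ →
        permEndo ⇑σ '' (N : Set FreeZ2) = (N : Set FreeZ2) := by
  have hone : (1 : FreeZ2) ∈ Finfty R := ⟨0, Fin.elim0, empty_mem hR, (aWord_zero _).symm⟩
  have hmul : ∀ a ∈ Finfty R, ∀ b ∈ Finfty R, a * b ∈ Finfty R := by
    rintro _ ⟨k, i, hi, rfl⟩ _ ⟨k', f, hf, rfl⟩
    refine ⟨k + k', Fin.append i f, ?_, (aWord_append i f).symm⟩
    have h := hR.conn_tensor_mem i (Fin.elim0 : Fin 0 → ℕ) f (Fin.elim0 : Fin 0 → ℕ)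
      hi hf rfl rfl
    rwa [append_elim0_elim0] at h
  have hinv : ∀ a ∈ Finfty R, a⁻¹ ∈ Finfty R := by
    rintro _ ⟨k, i, hi, rfl⟩
    have hI : kerPartA (Fin.elim0 : Fin 0 → ℕ) i ∈ R 0 k := by
      have := hR.invol_mem hi
      rwa [show invol (kerPart0 i) = kerPartA (Fin.elim0 : Fin 0 → ℕ) i from
        invol_ker i Fin.elim0] at this
    obtain ⟨K, W, hW, hw⟩ := rev_words hR k i 0 Fin.elim0 hI
    exact ⟨K, W, hW, by rw [hw, aWord_zero, one_mul]⟩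
  have hconj : ∀ g : FreeZ2, ∀ n ∈ Finfty R, g * n * g⁻¹ ∈ Finfty R := by
    intro g
    induction g using Monoid.CoprodI.induction_on with
    | one => intro n hn; simpa using hn
    | of idx m =>
        intro n hn
        rcases (by decide : ∀ y : Z2, y = 1 ∨ y = Multiplicative.ofAdd (1 : ZMod 2)) m
          with hm | hm
        · subst hm
          rw [map_one]
          simpa using hn
        · subst hm
          obtain ⟨k, i, hi, rfl⟩ := hn
          refine ⟨1 + (k + 1), Fin.append (cst idx) (Fin.append i (cst idx)),
            conj_ker hR i hi idx, ?_⟩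
          have hof : (Monoid.CoprodI.of (Multiplicative.ofAdd (1 : ZMod 2)) : FreeZ2)
              = gen idx := rfl
          rw [hof, gen_inv, aWord_append, aWord_cst, aWord_append, aWord_cst, mul_assoc]
    | mul x y hx hy =>
        intro n hn
        have hxy : x * y * n * (x * y)⁻¹ = x * (y * n * y⁻¹) * x⁻¹ := by group
        rw [hxy]
        exact hx _ (hy n hn)
  refine ⟨{ carrier := Finfty R,
            mul_mem' := fun ha hb => hmul _ ha _ hb,
            one_mem' := hone,
            inv_mem' := fun ha => hinv _ ha }, rfl, ⟨fun n hn g => hconj g n hn⟩, ?_⟩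
  intro σ _
  apply Set.eq_of_subset_of_subset
  · rintro _ ⟨x, ⟨k, i, hi, rfl⟩, rfl⟩
    exact ⟨k, ⇑σ ∘ i, by
      rwa [show kerPart0 (⇑σ ∘ i) = kerPart0 i from ker_comp_inj σ.injective i],
      permEndo_aWord ⇑σ i⟩
  · rintro _ ⟨k, i, hi, rfl⟩
    refine ⟨aWord (⇑σ.symm ∘ i), ⟨k, ⇑σ.symm ∘ i, by
      rwa [show kerPart0 (⇑σ.symm ∘ i) = kerPart0 i from ker_comp_inj σ.symm.injective i],
      rfl⟩, ?_⟩
    rw [permEndo_aWord]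
    have : (⇑σ ∘ ⇑σ.symm ∘ i) = i := funext fun x => σ.apply_symm_apply (i x)
    rw [this]


end GTQG
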